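/- For all integers n ≥ 1 and k ≥ 0, one has a₃(3n² + (3^{k+1}+2)n + 3^k) = a₃(n) · a₃(n + 3^k), i.e. |C_{3n²+(3^{k+1}+2)n+3^k}| = |C_n| · |C_{n+3^k}|. -/

import Mathlib

structure Ei where
  a : ℤ
  b : ℤ
deriving DecidableEq

namespace Ei

@[ext] theorem ext' {x y : Ei} (ha : x.a = y.a) (hb : x.b = y.b) : x = y := by
  cases x; cases y; simp_all

instance : Zero Ei := ⟨⟨0, 0⟩⟩
instance : One Ei := ⟨⟨1, 0⟩⟩
instance : Add Ei := ⟨fun x y => ⟨x.a + y.a, x.b + y.b⟩⟩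
instance : Neg Ei := ⟨fun x => ⟨-x.a, -x.b⟩⟩
instance : Mul Ei := ⟨fun x y => ⟨x.a * y.a - x.b * y.b, x.a * y.b + x.b * y.a + x.b * y.b⟩⟩

@[simp] theorem zero_a : (0 : Ei).a = 0 := rfl
@[simp] theorem zero_b : (0 : Ei).b = 0 := rfl
@[simp] theorem one_a : (1 : Ei).a = 1 := rfl
@[simp] theorem one_b : (1 : Ei).b = 0 := rfl
@[simp] theorem add_a (x y : Ei) : (x + y).a = x.a + y.a := rfl
@[simp] theorem add_b (x y : Ei) : (x + y).b = x.b + y.b := rfl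
@[simp] theorem neg_a (x : Ei) : (-x).a = -x.a := rfl
@[simp] theorem neg_b (x : Ei) : (-x).b = -x.b := rfl
@[simp] theorem mul_a (x y : Ei) : (x * y).a = x.a * y.a - x.b * y.b := rfl
@[simp] theorem mul_b (x y : Ei) : (x * y).b = x.a * y.b + x.b * y.a + x.b * y.b := rfl

instance commRing : CommRing Ei where
  add_assoc := by intros; ext <;> simp <;> ring
  zero_add := by intros; ext <;> simp
  add_zero := by intros; ext <;> simp
  add_comm := by intros; ext <;> simp <;> ring
  left_distrib := by intros; ext <;> simp <;> ring
  right_distrib := by intros; ext <;> simp <;> ring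
  zero_mul := by intros; ext <;> simp
  mul_zero := by intros; ext <;> simp
  mul_assoc := by intros; ext <;> simp <;> ring
  one_mul := by intros; ext <;> simp
  mul_one := by intros; ext <;> simp
  mul_comm := by intros; ext <;> simp <;> ring
  neg_add_cancel := by intros; ext <;> simp
  nsmul := fun n x => ⟨n * x.a, n * x.b⟩
  nsmul_zero := by intros; ext <;> simp [HSMul.hSMul, SMul.smul]
  nsmul_succ := by intros; ext <;> simp [HSMul.hSMul, SMul.smul] <;> ring
  zsmul := fun n x => ⟨n * x.a, n * x.b⟩
  zsmul_zero' := by intros; ext <;> simp [HSMul.hSMul, SMul.smul]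
  zsmul_succ' := by intros; ext <;> push_cast <;> simp [HSMul.hSMul, SMul.smul] <;> ring
  zsmul_neg' := by intros; ext <;> simp [Int.negSucc_eq, HSMul.hSMul, SMul.smul] <;> ring
  natCast := fun n => ⟨n, 0⟩
  natCast_zero := by ext <;> simp
  natCast_succ := by intros; ext <;> simp
  intCast := fun n => ⟨n, 0⟩
  intCast_ofNat := by intros; ext <;> rfl
  intCast_negSucc := fun _ => rfl

@[simp] theorem sub_a (x y : Ei) : (x - y).a = x.a - y.a := rfl
@[simp] theorem sub_b (x y : Ei) : (x - y).b = x.b - y.b := rfl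
@[simp] theorem intCast_a (n : ℤ) : (n : Ei).a = n := rfl
@[simp] theorem intCast_b (n : ℤ) : (n : Ei).b = 0 := rfl

end Ei

namespace Ei

def norm (z : Ei) : ℤ := z.a ^ 2 + z.a * z.b + z.b ^ 2

theorem norm_mul (x y : Ei) : norm (x * y) = norm x * norm y := by
  simp [norm]; ring

theorem norm_nonneg (z : Ei) : 0 ≤ norm z := by
  have h : 4 * norm z = (2 * z.a + z.b) ^ 2 + 3 * z.b ^ 2 := by simp [norm]; ring
  nlinarith [sq_nonneg (2 * z.a + z.b), sq_nonneg z.b]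

theorem norm_eq_zero_iff {z : Ei} : norm z = 0 ↔ z = 0 := by
  constructor
  · intro h
    have h4 : (2 * z.a + z.b) ^ 2 + 3 * z.b ^ 2 = 0 := by simp [norm] at h; nlinarith
    have hb : z.b = 0 := by nlinarith [sq_nonneg (2 * z.a + z.b), sq_nonneg z.b]
    have ha : z.a = 0 := by simp [norm, hb] at h; nlinarith [sq_nonneg z.a]
    ext <;> simp [ha, hb]
  · rintro rfl; simp [norm]

def conj (z : Ei) : Ei := ⟨z.a + z.b, -z.b⟩

theorem mul_conj (z : Ei) : z * conj z = (norm z : Ei) := by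
  ext <;> simp only [mul_a, mul_b, intCast_a, intCast_b, norm, conj] <;> ring

theorem norm_one : norm 1 = 1 := by simp [norm]

instance : Nontrivial Ei := ⟨⟨0, 1, fun h => by simpa using congrArg Ei.a h⟩⟩

instance : NoZeroDivisors Ei := by
  constructor
  intro x y h
  have := congrArg norm h
  rw [norm_mul] at this
  simp [norm] at this
  rcases mul_eq_zero.mp (by simpa [norm] using this : norm x * norm y = 0) with h' | h'
  · exact Or.inl (norm_eq_zero_iff.mp h')
  · exact Or.inr (norm_eq_zero_iff.mp h')

instance : IsDomain Ei := NoZeroDivisors.to_isDomain _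

end Ei

namespace Ei

theorem norm_pos {z : Ei} (hz : z ≠ 0) : 0 < norm z :=
  lt_of_le_of_ne (norm_nonneg z) (fun h => hz (norm_eq_zero_iff.mp h.symm))

/-- rounding division -/
def rd (p m : ℤ) : ℤ := (2 * p + m) / (2 * m)

theorem rd_bound {m : ℤ} (hm : 0 < m) (p : ℤ) :
    -m ≤ 2 * (p - rd p m * m) ∧ 2 * (p - rd p m * m) < m := by
  have h2m : (0:ℤ) < 2 * m := by omega
  have hmod := Int.emod_nonneg (2 * p + m) (by omega : (2:ℤ) * m ≠ 0)
  have hmod2 := Int.emod_lt_of_pos (2 * p + m) h2m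
  have hdm := Int.mul_ediv_add_emod (2 * p + m) (2 * m)
  unfold rd
  have e1 : 2 * ((2 * p + m) / (2 * m) * m) = 2 * m * ((2 * p + m) / (2 * m)) := by ring
  omega

def quot (z w : Ei) : Ei :=
  ⟨rd (z * conj w).a (norm w), rd (z * conj w).b (norm w)⟩

def rem (z w : Ei) : Ei := z - w * quot z w

theorem quot_zero (z : Ei) : quot z 0 = 0 := by
  ext <;> simp [quot, rd, norm]

theorem rem_norm_lt (z : Ei) {w : Ei} (hw : w ≠ 0) : norm (rem z w) < norm w := by
  have hm : 0 < norm w := norm_pos hw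
  set m := norm w with hmdef
  set q := quot z w with hq
  set p := z * conj w with hp
  have hra := rd_bound hm p.a
  have hrb := rd_bound hm p.b
  -- r = (z - w*q) * conj w = p - q * m
  have hr : rem z w * conj w = ⟨p.a - q.a * m, p.b - q.b * m⟩ := by
    have : rem z w * conj w = z * conj w - (w * conj w) * q := by unfold rem; ring
    rw [this, mul_conj]
    ext <;> simp [hq, quot, ← hmdef, ← hp] <;> ring
  have hnr : norm (rem z w) * m = norm (⟨p.a - q.a * m, p.b - q.b * m⟩ : Ei) := by
    rw [← hr, norm_mul]
    have : norm (conj w) = m := by simp [norm, conj, hmdef]; ring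
    rw [this]
  set s := p.a - (quot z w).a * m
  set t := p.b - (quot z w).b * m
  have hs1 : -m ≤ 2 * s := hra.1
  have hs2 : 2 * s < m := hra.2
  have ht1 : -m ≤ 2 * t := hrb.1
  have ht2 : 2 * t < m := hrb.2
  have hval : norm (⟨s, t⟩ : Ei) = s ^ 2 + s * t + t ^ 2 := by simp [norm]
  have hbound : 4 * (s ^ 2 + s * t + t ^ 2) ≤ 3 * m ^ 2 := by
    nlinarith [sq_nonneg (2*s - 2*t), sq_nonneg (2*s + 2*t), mul_pos hm hm]
  have : 4 * (norm (rem z w) * m) ≤ 3 * m ^ 2 := by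
    rw [hnr, hval]; exact hbound
  nlinarith [norm_nonneg (rem z w)]

instance : EuclideanDomain Ei where
  quotient := quot
  quotient_zero := quot_zero
  remainder := rem
  quotient_mul_add_remainder_eq := fun a b => by unfold rem; ring
  r := fun x y => (norm x).natAbs < (norm y).natAbs
  r_wellFounded := InvImage.wf (fun z => (norm z).natAbs) Nat.lt_wfRel.wf
  remainder_lt := fun a b hb => by
    have h1 := rem_norm_lt a hb
    have h2 := norm_nonneg (rem a b)
    have h3 := norm_nonneg b
    omega
  mul_left_not_lt := fun a b hb => by
    have h1 : 1 ≤ norm b := norm_pos hb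
    have h2 : norm (a * b) = norm a * norm b := norm_mul a b
    have h3 := norm_nonneg a
    have h4 : norm a ≤ norm (a * b) := by nlinarith
    have h5 := norm_nonneg (a * b)
    omega

end Ei

namespace Ei

@[simp] theorem natCast_a (n : ℕ) : (n : Ei).a = n := rfl
@[simp] theorem natCast_b (n : ℕ) : (n : Ei).b = 0 := rfl

theorem conj_mul (x y : Ei) : conj (x * y) = conj x * conj y := by
  ext <;> simp [conj] <;> ring

theorem conj_intCast (n : ℤ) : conj (n : Ei) = n := by
  ext <;> simp [conj]

theorem norm_conj (z : Ei) : norm (conj z) = norm z := by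
  simp [norm, conj]; ring

theorem intCast_dvd_intCast {m n : ℤ} : (m : Ei) ∣ (n : Ei) ↔ m ∣ n := by
  constructor
  · rintro ⟨w, hw⟩
    have := congrArg Ei.a hw
    simp at this
    exact ⟨w.a, this⟩
  · rintro ⟨c, rfl⟩
    exact ⟨(c : Ei), by push_cast; ring⟩

theorem dvd_norm (z : Ei) : z ∣ (norm z : Ei) := ⟨conj z, (mul_conj z).symm⟩

theorem isUnit_iff_norm {u : Ei} : IsUnit u ↔ norm u = 1 := by
  constructor
  · intro h
    obtain ⟨v, hv⟩ := h.exists_right_inv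
    have h1 : norm u * norm v = 1 := by rw [← norm_mul, hv, norm_one]
    exact Int.eq_one_of_mul_eq_one_right (norm_nonneg u) h1
  · intro h
    exact IsUnit.of_mul_eq_one (a := u) (conj u) (by rw [mul_conj, h]; norm_num)

theorem unit_cases {u : Ei} (h : IsUnit u) :
    u = ⟨1,0⟩ ∨ u = ⟨0,1⟩ ∨ u = ⟨-1,1⟩ ∨ u = ⟨-1,0⟩ ∨ u = ⟨0,-1⟩ ∨ u = ⟨1,-1⟩ := by
  have hn := isUnit_iff_norm.mp h
  obtain ⟨x, y⟩ := u
  simp only [norm] at hn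
  have hx1 : -1 ≤ x := by nlinarith [sq_nonneg (x+1), sq_nonneg (x+2*y)]
  have hx2 : x ≤ 1 := by nlinarith [sq_nonneg (x-1), sq_nonneg (x+2*y)]
  have hy1 : -1 ≤ y := by nlinarith [sq_nonneg (y+1), sq_nonneg (2*x+y)]
  have hy2 : y ≤ 1 := by nlinarith [sq_nonneg (y-1), sq_nonneg (2*x+y)]
  simp only [Ei.mk.injEq]
  interval_cases x <;> interval_cases y <;> omega

/-- `z ≡ 1 (mod 3)` -/
def Good (z : Ei) : Prop := (z.a : ZMod 3) = 1 ∧ (z.b : ZMod 3) = 0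

theorem good_unit_eq_one {u z : Ei} (hu : IsUnit u) (hz : Good z) (huz : Good (u * z)) :
    u = 1 := by
  rcases unit_cases hu with h | h | h | h | h | h <;> subst h
  · rfl
  · exfalso
    have g1 := huz.1
    simp only [mul_a] at g1; push_cast at g1
    simp only [hz.1, hz.2] at g1
    revert g1; decide
  · exfalso
    have g1 := huz.1
    simp only [mul_a] at g1; push_cast at g1
    simp only [hz.1, hz.2] at g1
    revert g1; decide
  · exfalso
    have g1 := huz.1
    simp only [mul_a] at g1; push_cast at g1
    simp only [hz.1, hz.2] at g1
    revert g1; decide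
  · exfalso
    have g1 := huz.1
    simp only [mul_a] at g1; push_cast at g1
    simp only [hz.1, hz.2] at g1
    revert g1; decide
  · exfalso
    have g2 := huz.2
    simp only [mul_b] at g2; push_cast at g2
    simp only [hz.1, hz.2] at g2
    revert g2; decide

theorem exists_unit_good {z : Ei} (h : ((norm z : ℤ) : ZMod 3) = 1) :
    ∃ u : Ei, IsUnit u ∧ Good (u * z) := by
  have hn : (z.a : ZMod 3) ^ 2 + (z.a : ZMod 3) * (z.b : ZMod 3) + (z.b : ZMod 3) ^ 2 = 1 := by
    rw [← h]; simp only [norm]; push_cast; ring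
  have key : ∀ x y : ZMod 3, x ^ 2 + x * y + y ^ 2 = 1 →
      (x = 1 ∧ y = 0) ∨ (-y = 1 ∧ x + y = 0) ∨ (-x - y = 1 ∧ x = 0) ∨
      (-x = 1 ∧ -y = 0) ∨ (y = 1 ∧ -x - y = 0) ∨ (x + y = 1 ∧ -x = 0) := by decide
  rcases key _ _ hn with ⟨e1, e2⟩ | ⟨e1, e2⟩ | ⟨e1, e2⟩ | ⟨e1, e2⟩ | ⟨e1, e2⟩ | ⟨e1, e2⟩
  · exact ⟨⟨1,0⟩, isUnit_iff_norm.mpr (by simp [norm]),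
      ⟨by simp only [mul_a]; push_cast; linear_combination e1,
       by simp only [mul_b]; push_cast; linear_combination e2⟩⟩
  · exact ⟨⟨0,1⟩, isUnit_iff_norm.mpr (by simp [norm]),
      ⟨by simp only [mul_a]; push_cast; linear_combination e1,
       by simp only [mul_b]; push_cast; linear_combination e2⟩⟩
  · exact ⟨⟨-1,1⟩, isUnit_iff_norm.mpr (by simp [norm]),
      ⟨by simp only [mul_a]; push_cast; linear_combination e1,
       by simp only [mul_b]; push_cast; linear_combination e2⟩⟩
  · exact ⟨⟨-1,0⟩, isUnit_iff_norm.mpr (by simp [norm]),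
      ⟨by simp only [mul_a]; push_cast; linear_combination e1,
       by simp only [mul_b]; push_cast; linear_combination e2⟩⟩
  · exact ⟨⟨0,-1⟩, isUnit_iff_norm.mpr (by simp [norm]),
      ⟨by simp only [mul_a]; push_cast; linear_combination e1,
       by simp only [mul_b]; push_cast; linear_combination e2⟩⟩
  · exact ⟨⟨1,-1⟩, isUnit_iff_norm.mpr (by simp [norm]),
      ⟨by simp only [mul_a]; push_cast; linear_combination e1,
       by simp only [mul_b]; push_cast; linear_combination e2⟩⟩

end Ei

namespace Ei

instance : GCDMonoid Ei := EuclideanDomain.gcdMonoid Ei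

theorem good_mul {x y : Ei} (hx : Good x) (hy : Good y) : Good (x * y) := by
  constructor
  · simp only [mul_a]; push_cast; rw [hx.1, hx.2, hy.1, hy.2]; norm_num
  · simp only [mul_b]; push_cast; rw [hx.1, hx.2, hy.1, hy.2]; norm_num

theorem norm_dvd_sq {w : Ei} {m : ℤ} (h : w ∣ (m : Ei)) : norm w ∣ m ^ 2 := by
  obtain ⟨c, hc⟩ := h
  have hconj : conj w ∣ (m : Ei) := ⟨conj c, by rw [← conj_intCast, hc, conj_mul]⟩
  have : (norm w : Ei) ∣ ((m ^ 2 : ℤ) : Ei) := by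
    rw [← mul_conj]
    have : ((m ^ 2 : ℤ) : Ei) = (m : Ei) * (m : Ei) := by push_cast; ring
    rw [this]
    exact mul_dvd_mul (Dvd.intro c hc.symm) hconj
  exact intCast_dvd_intCast.mp this

theorem exists_factor {u v : ℤ} (hu : 0 < u) (hv : 0 < v) (huv : IsCoprime u v)
    (hu3 : ((u : ℤ) : ZMod 3) = 1) {z : Ei} (hz : norm z = u * v) (hg : Good z) :
    ∃ z₁ z₂ : Ei, z = z₁ * z₂ ∧ norm z₁ = u ∧ norm z₂ = v ∧ Good z₁ ∧ Good z₂ := by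
  have hzdvd : z ∣ (u : Ei) * (v : Ei) := by
    have := dvd_norm z
    rw [hz] at this
    rwa [show ((u * v : ℤ) : Ei) = (u : Ei) * (v : Ei) by push_cast; ring] at this
  obtain ⟨w₁, w₂, hw1, hw2, hzw⟩ := exists_dvd_and_dvd_of_dvd_mul hzdvd
  have hn : norm w₁ * norm w₂ = u * v := by rw [← norm_mul, ← hzw, hz]
  have hn1sq : norm w₁ ∣ u ^ 2 := norm_dvd_sq hw1
  have hn2sq : norm w₂ ∣ v ^ 2 := norm_dvd_sq hw2
  have hc1 : IsCoprime (norm w₁) v :=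
    IsCoprime.of_isCoprime_of_dvd_left (IsCoprime.pow_left huv : IsCoprime (u^2) v) hn1sq
  have hc2 : IsCoprime (norm w₂) u :=
    IsCoprime.of_isCoprime_of_dvd_left (IsCoprime.pow_left huv.symm : IsCoprime (v^2) u) hn2sq
  have hd1 : norm w₁ ∣ u := hc1.dvd_of_dvd_mul_right ⟨norm w₂, hn.symm⟩
  have hd2 : norm w₂ ∣ v := by
    have hvu : v * u = norm w₂ * norm w₁ := by rw [mul_comm v u, ← hn]; ring
    exact hc2.dvd_of_dvd_mul_right ⟨norm w₁, hvu⟩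
  have hzne : z ≠ 0 := by
    intro h0
    rw [h0] at hz
    simp [norm] at hz
    rcases hz with h | h <;> omega
  have hw1ne : w₁ ≠ 0 := fun h0 => hzne (by rw [hzw, h0, zero_mul])
  have hw2ne : w₂ ≠ 0 := fun h0 => hzne (by rw [hzw, h0, mul_zero])
  have hp1 : 0 < norm w₁ := norm_pos hw1ne
  have hp2 : 0 < norm w₂ := norm_pos hw2ne
  obtain ⟨a, ha⟩ := hd1
  obtain ⟨b, hb⟩ := hd2
  have hab : a * b = 1 := by
    have h1 : norm w₁ * norm w₂ = (norm w₁ * norm w₂) * (a * b) := by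
      calc norm w₁ * norm w₂ = u * v := hn
        _ = (norm w₁ * a) * (norm w₂ * b) := by rw [← ha, ← hb]
        _ = (norm w₁ * norm w₂) * (a * b) := by ring
    have h2 : (norm w₁ * norm w₂) * 1 = (norm w₁ * norm w₂) * (a * b) := by
      rw [mul_one]; exact h1
    exact (mul_left_cancel₀ (by positivity) h2).symm
  have hapos : 0 < a := by nlinarith
  have ha1 : a = 1 := Int.eq_one_of_mul_eq_one_right (le_of_lt hapos) hab
  have hnorm1 : norm w₁ = u := by rw [ha, ha1, mul_one]
  have hnorm2 : norm w₂ = v := by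
    have h' : u * norm w₂ = u * v := by
      calc u * norm w₂ = norm w₁ * norm w₂ := by rw [hnorm1]
        _ = u * v := hn
    exact mul_left_cancel₀ (ne_of_gt hu) h'
  -- normalize by a unit
  obtain ⟨e, he, heg⟩ := exists_unit_good (z := w₁) (by rw [hnorm1]; exact hu3)
  obtain ⟨d, hd⟩ := he.exists_right_inv
  have hdunit : IsUnit d := IsUnit.of_mul_eq_one (a := d) e (by rw [mul_comm]; exact hd)
  refine ⟨e * w₁, d * w₂, ?_, ?_, ?_, heg, ?_⟩
  · calc z = 1 * z := (one_mul z).symm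
      _ = (e * d) * (w₁ * w₂) := by rw [hd, hzw]
      _ = (e * w₁) * (d * w₂) := by ring
  · rw [norm_mul, isUnit_iff_norm.mp he, one_mul, hnorm1]
  · rw [norm_mul, isUnit_iff_norm.mp hdunit, one_mul, hnorm2]
  · -- Good (d * w₂), from z = (e*w₁) * (d*w₂), Good z, Good (e*w₁)
    have hzq : z = (e * w₁) * (d * w₂) := by
      calc z = 1 * z := (one_mul z).symm
        _ = (e * d) * (w₁ * w₂) := by rw [hd, hzw]
        _ = (e * w₁) * (d * w₂) := by ring
    set s := e * w₁ with hs
    set t := d * w₂ with ht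
    have hA : ((z.a : ℤ) : ZMod 3) = 1 := hg.1
    have hB : ((z.b : ℤ) : ZMod 3) = 0 := hg.2
    rw [hzq] at hA hB
    simp only [mul_a, mul_b] at hA hB
    push_cast at hA hB
    rw [heg.1, heg.2] at hA hB
    constructor
    · simpa using hA
    · simpa using hB

theorem factor_unique {u v : ℤ} (huv : IsCoprime u v) (hu : u ≠ 0) {z₁ z₂ w₁ w₂ : Ei}
    (h1 : norm z₁ = u) (h2 : norm z₂ = v) (h3 : norm w₁ = u) (h4 : norm w₂ = v)
    (g1 : Good z₁) (g3 : Good w₁) (g4 : Good w₂)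
    (heq : z₁ * z₂ = w₁ * w₂) : z₁ = w₁ ∧ z₂ = w₂ := by
  have hEi : IsCoprime ((u : ℤ) : Ei) ((v : ℤ) : Ei) := huv.map (Int.castRingHom Ei)
  have dz1 : z₁ ∣ (u : Ei) := by rw [← h1]; exact dvd_norm z₁
  have dw1 : w₁ ∣ (u : Ei) := by rw [← h3]; exact dvd_norm w₁
  have dz2 : z₂ ∣ (v : Ei) := by rw [← h2]; exact dvd_norm z₂
  have dw2 : w₂ ∣ (v : Ei) := by rw [← h4]; exact dvd_norm w₂
  have c1 : IsCoprime z₁ w₂ :=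
    IsCoprime.of_isCoprime_of_dvd_right (IsCoprime.of_isCoprime_of_dvd_left hEi dz1) dw2
  have c2 : IsCoprime w₁ z₂ :=
    IsCoprime.of_isCoprime_of_dvd_right (IsCoprime.of_isCoprime_of_dvd_left hEi dw1) dz2
  have d12 : z₁ ∣ w₁ := by
    have : z₁ ∣ w₁ * w₂ := ⟨z₂, heq.symm⟩
    exact c1.dvd_of_dvd_mul_right this
  have d21 : w₁ ∣ z₁ := by
    have : w₁ ∣ z₁ * z₂ := ⟨w₂, heq⟩
    exact c2.dvd_of_dvd_mul_right this
  obtain ⟨e, he⟩ := (associated_of_dvd_dvd d12 d21)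
  have hz1w1 : z₁ = w₁ := by
    have heunit : IsUnit (e : Ei) := e.isUnit
    have hgood : Good ((e : Ei) * z₁) := by rw [mul_comm, he]; exact g3
    have := good_unit_eq_one heunit g1 hgood
    rw [← he, this, mul_one]
  refine ⟨hz1w1, ?_⟩
  have hz1ne : z₁ ≠ 0 := by
    intro h0
    rw [h0] at h1
    simp [norm] at h1
    exact hu h1.symm
  apply mul_left_cancel₀ hz1ne
  rw [heq, hz1w1]

def T (m : ℤ) : Set Ei := {z | norm z = m ∧ Good z}

theorem Tcard_mul {u v : ℤ} (hu : 0 < u) (hv : 0 < v) (huv : IsCoprime u v)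
    (hu3 : ((u : ℤ) : ZMod 3) = 1) :
    Nat.card (T (u * v)) = Nat.card (T u) * Nat.card (T v) := by
  rw [← Nat.card_prod]
  refine (Nat.card_congr (Equiv.ofBijective
    (fun p : T u × T v => (⟨(p.1 : Ei) * (p.2 : Ei), ?_, ?_⟩ : T (u * v))) ⟨?_, ?_⟩)).symm
  · rw [norm_mul, p.1.2.1, p.2.2.1]
  · exact good_mul p.1.2.2 p.2.2.2
  · rintro ⟨⟨x1, hx1⟩, ⟨x2, hx2⟩⟩ ⟨⟨y1, hy1⟩, ⟨y2, hy2⟩⟩ h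
    simp only [Subtype.mk.injEq] at h
    obtain ⟨e1, e2⟩ := factor_unique huv (ne_of_gt hu) hx1.1 hx2.1 hy1.1 hy2.1
      hx1.2 hy1.2 hy2.2 (congrArg Subtype.val h)
    simp [Prod.ext_iff, Subtype.ext_iff, e1, e2]
  · rintro ⟨z, hz1, hz2⟩
    obtain ⟨z₁, z₂, hzz, hn1, hn2, hg1, hg2⟩ := exists_factor hu hv huv hu3 hz1 hz2
    exact ⟨⟨⟨z₁, hn1, hg1⟩, ⟨z₂, hn2, hg2⟩⟩, by simp [← hzz]⟩

end Ei

/-- `C n` is the set of characteristic vectors of 3-core partitions of `n`;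
`a₃(n) := (C n).ncard` is the number of 3-core partitions of `n`. -/
def C (n : ℤ) : Set (ℤ × ℤ) :=
  {p | 3 * p.1 ^ 2 + 3 * p.1 * p.2 + 3 * p.2 ^ 2 + p.1 + 2 * p.2 = n}

theorem h3zmod : ((3 : ZMod 3)) = 0 := by decide

theorem Ccard (n : ℤ) : Nat.card (C n) = Nat.card (Ei.T (3 * n + 1)) := by
  refine Nat.card_congr (Equiv.ofBijective
    (fun p : C n => (⟨⟨3 * (p : ℤ × ℤ).1 + 3 * (p : ℤ × ℤ).2 + 1, -3 * (p : ℤ × ℤ).1⟩,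
      ?_, ?_, ?_⟩ : Ei.T (3 * n + 1))) ⟨?_, ?_⟩)
  · have hp := p.2
    simp only [C, Set.mem_setOf_eq] at hp
    simp only [Ei.norm]
    linear_combination 3 * hp
  · push_cast
    linear_combination ((p : ℤ × ℤ).1 + (p : ℤ × ℤ).2 : ZMod 3) * h3zmod
  · push_cast
    linear_combination (-(p : ℤ × ℤ).1 : ZMod 3) * h3zmod
  · rintro ⟨⟨x1, y1⟩, hx⟩ ⟨⟨x2, y2⟩, hy⟩ h
    simp only [Subtype.mk.injEq, Ei.mk.injEq] at h
    have h := congrArg (fun s : Ei.T (3 * n + 1) => ((s : Ei).a, (s : Ei).b)) h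
    simp only [Prod.mk.injEq] at h
    apply Subtype.ext
    simp only [Prod.mk.injEq]
    omega
  · rintro ⟨z, hz1, hza, hzb⟩
    have hdb : (3 : ℤ) ∣ z.b := by
      have := (ZMod.intCast_zmod_eq_zero_iff_dvd z.b 3).mp hzb
      exact_mod_cast this
    have hda : (3 : ℤ) ∣ z.a - 1 := by
      have h0 : ((z.a - 1 : ℤ) : ZMod 3) = 0 := by push_cast; rw [hza]; ring
      have := (ZMod.intCast_zmod_eq_zero_iff_dvd (z.a - 1) 3).mp h0
      exact_mod_cast this
    obtain ⟨p, hp⟩ := hdb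
    obtain ⟨q, hq⟩ := hda
    have hmem : (-p, q + p) ∈ C n := by
      simp only [C, Set.mem_setOf_eq]
      have hnorm : z.a ^ 2 + z.a * z.b + z.b ^ 2 = 3 * n + 1 := hz1
      have h3 : (3 : ℤ) * (3 * (-p) ^ 2 + 3 * (-p) * (q + p) + 3 * (q + p) ^ 2 +
          (-p) + 2 * (q + p)) = 3 * n := by
        have hza' : z.a = 3 * q + 1 := by omega
        have hzb' : z.b = 3 * p := by omega
        rw [hza', hzb'] at hnorm
        linear_combination hnorm
      have := mul_left_cancel₀ (by norm_num : (3:ℤ) ≠ 0) h3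
      linarith
    refine ⟨⟨(-p, q + p), hmem⟩, ?_⟩
    apply Subtype.ext
    ext <;> simp <;> omega

theorem stmt15 (n k : ℕ) (hn : 1 ≤ n) :
    (C ((3 * n ^ 2 + (3 ^ (k + 1) + 2) * n + 3 ^ k : ℕ) : ℤ)).ncard =
      (C (n : ℤ)).ncard * (C ((n + 3 ^ k : ℕ) : ℤ)).ncard := by
  have key : ∀ m : ℤ, (C m).ncard = Nat.card (Ei.T (3 * m + 1)) := fun m => by
    rw [← Nat.card_coe_set_eq]; exact Ccard m
  rw [key, key, key]
  have hu : (0 : ℤ) < 3 * (n : ℤ) + 1 := by positivity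
  have hv : (0 : ℤ) < 3 * ((n : ℤ) + 3 ^ k) + 1 := by positivity
  have h3 : IsCoprime (3 * (n : ℤ) + 1) (3 : ℤ) := ⟨1, -(n : ℤ), by ring⟩
  have hpow : IsCoprime (3 * (n : ℤ) + 1) ((3 : ℤ) ^ (k + 1)) := h3.pow_right
  have huv : IsCoprime (3 * (n : ℤ) + 1) (3 * ((n : ℤ) + 3 ^ k) + 1) := by
    have h' := hpow.add_mul_left_right 1
    have e : (3 : ℤ) ^ (k + 1) + (3 * (n : ℤ) + 1) * 1 = 3 * ((n : ℤ) + 3 ^ k) + 1 := by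
      ring
    rwa [e] at h'
  have hu3 : (((3 * (n : ℤ) + 1 : ℤ)) : ZMod 3) = 1 := by
    push_cast
    linear_combination ((n : ZMod 3)) * h3zmod
  have harg : 3 * ((3 * n ^ 2 + (3 ^ (k + 1) + 2) * n + 3 ^ k : ℕ) : ℤ) + 1 =
      (3 * (n : ℤ) + 1) * (3 * ((n : ℤ) + 3 ^ k) + 1) := by
    push_cast; ring
  have harg2 : 3 * ((n + 3 ^ k : ℕ) : ℤ) + 1 = 3 * ((n : ℤ) + 3 ^ k) + 1 := by
    push_cast; ring
  rw [harg, harg2]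
  exact Ei.Tcard_mul hu hv huv hu3
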